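/- Let W = (ω_1,…,ω_n) be an integral basis of A, and let e ∈ K[x] and M ∈ K[x]^{n×n} satisfy eW′ = MW with gcd(e, m_{1,1},…,m_{n,n}) = 1. If a ∈ K̄ is a root of e, then there exists an element ω of W such that a is a branch point of ω. -/

import Mathlib

noncomputable section
open scoped Classical

open Polynomial

/-- Termwise derivative (w.r.t. `x`) of a generalized (Hahn/Puiseux) series in `x - a`:
the exponent-`q` coefficient of `P'` is `(q+1)` times the exponent-`(q+1)` coefficient of `P`. -/
def hderiv {F : Type} [Field F] (P : HahnSeries ℚ F) : HahnSeries ℚ F where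
  coeff q := ((q + 1 : ℚ) : F) * P.coeff (q + 1)
  isPWO_support' := by
    have hsub : (Function.support fun q : ℚ => ((q + 1 : ℚ) : F) * P.coeff (q + 1))
        ⊆ (fun q : ℚ => q - 1) '' P.support := by
      intro q hq
      refine ⟨q + 1, ?_, by ring⟩
      intro h0
      simp [Function.mem_support, h0] at hq
    exact (P.isPWO_support.image_of_monotoneOn
      (fun x _ y _ hxy => by simpa using hxy)).mono hsub

/-- The valuation of a generalized (Hahn/Puiseux) series: the least exponent occurring,
and `⊤` for the zero series. -/
def hval {F : Type} [Field F] (P : HahnSeries ℚ F) : WithTop ℚ :=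
  if h : P = 0 then ⊤
  else ((P.isWF_support.min (HahnSeries.support_nonempty_iff.mpr h) : ℚ) : WithTop ℚ)

/-- A series is ramified if some exponent in its support is not an integer. -/
def Ramified {F : Type} [Field F] (P : HahnSeries ℚ F) : Prop :=
  ∃ q ∈ P.support, ∀ z : ℤ, (z : ℚ) ≠ q

/-- The set of fractional (non-integer) exponents occurring in a series. -/
def fracSupport {F : Type} [Field F] (P : HahnSeries ℚ F) : Set ℚ :=
  {q | q ∈ P.support ∧ ∀ z : ℤ, (z : ℚ) ≠ q}

/-- The minimal fractional exponent `δ(P)` of a series; `⊤` if `P` is not ramified. -/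
def delta {F : Type} [Field F] (P : HahnSeries ℚ F) : WithTop ℚ :=
  if h : (fracSupport P).Nonempty then
    (((P.isWF_support.mono (fun q hq => hq.1)).min h : ℚ) : WithTop ℚ)
  else ⊤

/-- A Hahn series over `ℚ` is a Puiseux series if its exponents have a common denominator. -/
def IsPuiseux {F : Type} [Field F] (P : HahnSeries ℚ F) : Prop :=
  ∃ r : ℕ, 0 < r ∧ ∀ q ∈ P.support, ∃ z : ℤ, (z : ℚ) / r = q

/-! ### The algebraic function field `A = K(x)[y]/⟨m⟩` -/

/-- The canonical image in `A = K(x)[y]/⟨m⟩` of a polynomial `p ∈ K[x]`. -/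
def toA {K : Type} [Field K] (m : Polynomial (RatFunc K)) (p : Polynomial K) :
    AdjoinRoot m :=
  algebraMap (RatFunc K) (AdjoinRoot m) (algebraMap (Polynomial K) (RatFunc K) p)

/-- `D` is the derivation on `A = K(x)[y]/⟨m⟩` extending `d/dx` on `K(x)`:
it is additive, satisfies the Leibniz rule, and restricts to `d/dx` on `K[x]`
(hence, being a derivation on a field, on all of `K(x)`). -/
structure IsDerivationOnA {K : Type} [Field K] (m : Polynomial (RatFunc K))
    (D : AdjoinRoot m → AdjoinRoot m) : Prop where
  map_add : ∀ f g, D (f + g) = D f + D g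
  leibniz : ∀ f g, D (f * g) = f * D g + g * D f
  map_poly : ∀ p : Polynomial K, D (toA m p) = toA m (Polynomial.derivative p)

/-- `W` is a basis of `A` as a vector space over `K(x)`. -/
def IsKxBasis {K : Type} [Field K] {m : Polynomial (RatFunc K)}
    (W : Fin m.natDegree → AdjoinRoot m) : Prop :=
  LinearIndependent (RatFunc K) W ∧ Submodule.span (RatFunc K) (Set.range W) = ⊤

/-- `e W′ = M W` componentwise. -/
def DerivRel {K : Type} [Field K] {m : Polynomial (RatFunc K)}
    (D : AdjoinRoot m → AdjoinRoot m) (W : Fin m.natDegree → AdjoinRoot m)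
    (e : Polynomial K) (M : Matrix (Fin m.natDegree) (Fin m.natDegree) (Polynomial K)) : Prop :=
  ∀ i, toA m e * D (W i) = ∑ j, toA m (M i j) * W j

/-- `gcd(e, m₁₁, …, mₙₙ) = 1`: the only common divisors of `e` and the entries of `M`
are units. -/
def GcdOne {K : Type} [Field K] {n : ℕ}
    (e : Polynomial K) (M : Matrix (Fin n) (Fin n) (Polynomial K)) : Prop :=
  ∀ p : Polynomial K, p ∣ e → (∀ i j, p ∣ M i j) → IsUnit p

/-! ### Puiseux expansions around a point `a` of the algebraic closure -/

/-- The family of the `n` distinct `K(x)`-embeddings of `A = K(x)[y]/⟨m⟩` into the field of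
Puiseux series around a point `a`: each embedding is a ring homomorphism into the Hahn series
field whose values are Puiseux series, sending constants `c ∈ K` to constant series and the
rational function `x` to `a + (x - a)`, i.e. to the series `a + t` where `t` stands
for `x - a`. -/
structure EmbFamily (K F : Type) [Field K] [Field F] [Algebra K F]
    (m : Polynomial (RatFunc K)) (a : F) where
  emb : Fin m.natDegree → (AdjoinRoot m →+* HahnSeries ℚ F)
  emb_injective : Function.Injective emb
  emb_C : ∀ i (c : K), emb i (toA m (Polynomial.C c)) = HahnSeries.single 0 (algebraMap K F c)
  emb_X : ∀ i, emb i (toA m Polynomial.X) =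
    HahnSeries.single 0 a + HahnSeries.single 1 1
  emb_puiseux : ∀ i f, IsPuiseux (emb i f)

/-- The embeddings around `a` are differential homomorphisms: they intertwine the derivation
`D` on `A` with the termwise derivative of series. -/
def IsDiffFamily {K F : Type} [Field K] [Field F] [Algebra K F]
    {m : Polynomial (RatFunc K)} {a : F} (D : AdjoinRoot m → AdjoinRoot m)
    (σ : EmbFamily K F m a) : Prop :=
  ∀ i f, σ.emb i (D f) = hderiv (σ.emb i f)

/-- `f ∈ A` is locally integral at `a`, i.e. `val_a(f) ≥ 0`: all Puiseux series associated
to `f` around `a` have nonnegative valuation. -/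
def LocIntegralAt {K F : Type} [Field K] [Field F] [Algebra K F]
    {m : Polynomial (RatFunc K)} {a : F} (σ : EmbFamily K F m a)
    (f : AdjoinRoot m) : Prop :=
  ∀ i, 0 ≤ hval (σ.emb i f)

/-- `a` is a branch point of `f ∈ A`: one of the Puiseux series associated to `f` around `a`
is ramified. -/
def IsBranchPointOf {K F : Type} [Field K] [Field F] [Algebra K F]
    {m : Polynomial (RatFunc K)} {a : F} (σ : EmbFamily K F m a)
    (f : AdjoinRoot m) : Prop :=
  ∃ i, Ramified (σ.emb i f)

/-- `f ∈ A` is (globally) integral: locally integral at every point `a` of the algebraic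
closure of `K` (given the system `σ` of Puiseux expansions around each point). -/
def IntegralElem {K : Type} [Field K] {m : Polynomial (RatFunc K)}
    (σ : ∀ a : AlgebraicClosure K, EmbFamily K (AlgebraicClosure K) m a)
    (f : AdjoinRoot m) : Prop :=
  ∀ a, LocIntegralAt (σ a) f

/-- `W` is an integral basis of `A`: a `K(x)`-vector-space basis consisting of integral
elements such that every integral element is a `K[x]`-linear combination of `W`. -/
def IsIntegralBasis {K : Type} [Field K] {m : Polynomial (RatFunc K)}
    (σ : ∀ a : AlgebraicClosure K, EmbFamily K (AlgebraicClosure K) m a)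
    (W : Fin m.natDegree → AdjoinRoot m) : Prop :=
  IsKxBasis W ∧ (∀ i, IntegralElem σ (W i)) ∧
    ∀ f, IntegralElem σ f → ∃ c : Fin m.natDegree → Polynomial K,
      f = ∑ i, toA m (c i) * W i

/-- The rational function `r ∈ K(x)` has no pole at `a`: `r = p/q` with `q(a) ≠ 0`. -/
def NoPoleAt {K F : Type} [Field K] [Field F] [Algebra K F] (a : F) (r : RatFunc K) : Prop :=
  ∃ p q : Polynomial K, Polynomial.aeval a q ≠ 0 ∧
    r * algebraMap (Polynomial K) (RatFunc K) q = algebraMap (Polynomial K) (RatFunc K) p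

/-- `W` is a local integral basis of `A` at `a`: a `K(x)`-vector-space basis consisting of
elements that are locally integral at `a`, such that every element of `A` that is locally
integral at `a` is a linear combination of `W` with coefficients in `K(x)_a` (rational
functions without a pole at `a`). -/
def IsLocalIntegralBasisAt {K F : Type} [Field K] [Field F] [Algebra K F]
    {m : Polynomial (RatFunc K)} {a : F} (σ : EmbFamily K F m a)
    (W : Fin m.natDegree → AdjoinRoot m) : Prop :=
  IsKxBasis W ∧ (∀ i, LocIntegralAt σ (W i)) ∧
    ∀ f, LocIntegralAt σ f → ∃ c : Fin m.natDegree → RatFunc K,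
      (∀ i, NoPoleAt a (c i)) ∧ f = ∑ i, algebraMap (RatFunc K) (AdjoinRoot m) (c i) * W i

/-! ### Auxiliary machinery -/

namespace BranchAux

open HahnSeries

variable {F : Type} [Field F]

theorem hval_eq_orderTop (P : HahnSeries ℚ F) : hval P = P.orderTop := rfl

/-- All exponents in the support are at least `c`. -/
def SuppGE (c : ℚ) (P : HahnSeries ℚ F) : Prop := ∀ q ∈ P.support, c ≤ q

/-- All exponents in the support are integers. -/
def SuppInt (P : HahnSeries ℚ F) : Prop := ∀ q ∈ P.support, ∃ z : ℤ, (z : ℚ) = q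

theorem le_hval_iff {P : HahnSeries ℚ F} {c : ℚ} :
    (c : WithTop ℚ) ≤ hval P ↔ SuppGE c P := by
  unfold hval
  split_ifs with h
  · simp [SuppGE, h]
  · rw [WithTop.coe_le_coe]
    constructor
    · intro hc q hq; exact le_trans hc (Set.IsWF.min_le _ _ hq)
    · intro hc; exact (Set.IsWF.le_min_iff _ _).2 fun b hb => hc b hb

theorem hval_nonneg_iff {P : HahnSeries ℚ F} : 0 ≤ hval P ↔ SuppGE 0 P := by
  have := le_hval_iff (P := P) (c := 0)
  simpa using this

theorem not_ramified_iff {P : HahnSeries ℚ F} : ¬ Ramified P ↔ SuppInt P := by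
  unfold Ramified SuppInt
  push_neg
  rfl

theorem suppGE_zero' {c : ℚ} : SuppGE c (0 : HahnSeries ℚ F) := by
  intro q hq
  simp at hq

theorem suppGE_add {c : ℚ} {P Q : HahnSeries ℚ F} (hP : SuppGE c P) (hQ : SuppGE c Q) :
    SuppGE c (P + Q) := by
  intro q hq
  rcases HahnSeries.support_add_subset _ _ hq with h | h
  · exact hP q h
  · exact hQ q h

theorem suppGE_sum {c : ℚ} {ι : Type*} {s : Finset ι} {f : ι → HahnSeries ℚ F}
    (h : ∀ i ∈ s, SuppGE c (f i)) : SuppGE c (∑ i ∈ s, f i) :=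
  Finset.sum_induction f (SuppGE c) (fun _ _ => suppGE_add) suppGE_zero' h

theorem suppGE_mul {c d : ℚ} {P Q : HahnSeries ℚ F} (hP : SuppGE c P) (hQ : SuppGE d Q) :
    SuppGE (c + d) (P * Q) := by
  intro q hq
  obtain ⟨u, hu, v, hv, rfl⟩ := Set.mem_add.mp (HahnSeries.support_mul_subset hq)
  exact add_le_add (hP u hu) (hQ v hv)

theorem suppInt_zero : SuppInt (0 : HahnSeries ℚ F) := by
  intro q hq; simp at hq

theorem suppInt_add {P Q : HahnSeries ℚ F} (hP : SuppInt P) (hQ : SuppInt Q) :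
    SuppInt (P + Q) := by
  intro q hq
  rcases HahnSeries.support_add_subset _ _ hq with h | h
  · exact hP q h
  · exact hQ q h

theorem suppInt_mul {P Q : HahnSeries ℚ F} (hP : SuppInt P) (hQ : SuppInt Q) :
    SuppInt (P * Q) := by
  intro q hq
  obtain ⟨u, hu, v, hv, rfl⟩ := Set.mem_add.mp (HahnSeries.support_mul_subset hq)
  obtain ⟨z, hz⟩ := hP u hu
  obtain ⟨w, hw⟩ := hQ v hv
  exact ⟨z + w, by push_cast [hz, hw]; ring⟩

theorem coeff_zero_mul {P Q : HahnSeries ℚ F} (hP : SuppGE 0 P) (hQ : SuppGE 0 Q) :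
    (P * Q).coeff 0 = P.coeff 0 * Q.coeff 0 := by
  rw [HahnSeries.coeff_mul]
  have hsub : Finset.antidiagonal P.isPWO_support Q.isPWO_support 0 ⊆ {((0 : ℚ), (0 : ℚ))} := by
    intro ij hij
    rw [Finset.mem_addAntidiagonal] at hij
    obtain ⟨h1, h2, h3⟩ := hij
    have e1 := hP _ h1
    have e2 := hQ _ h2
    have hx : ij.1 = 0 := le_antisymm (by linarith) e1
    have hy : ij.2 = 0 := le_antisymm (by linarith) e2
    simp [Finset.mem_singleton, Prod.ext_iff, hx, hy]
  rw [Finset.sum_subset hsub]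
  · simp
  · intro x hx hnx
    rw [Finset.mem_singleton] at hx
    subst hx
    rw [Finset.mem_addAntidiagonal] at hnx
    push_neg at hnx
    by_cases hp0 : P.coeff 0 = 0
    · simp [hp0]
    · have h2 := hnx hp0
      by_cases hq0 : Q.coeff 0 = 0
      · simp [hq0]
      · exact absurd (by simp) (h2 hq0)

theorem coeff_one_mul {P Q : HahnSeries ℚ F} (hP : SuppGE 0 P) (hQ : SuppGE 0 Q)
    (hPI : SuppInt P) (hQI : SuppInt Q) :
    (P * Q).coeff 1 = P.coeff 0 * Q.coeff 1 + P.coeff 1 * Q.coeff 0 := by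
  rw [HahnSeries.coeff_mul]
  have hsub : Finset.antidiagonal P.isPWO_support Q.isPWO_support 1 ⊆
      {((0 : ℚ), (1 : ℚ)), ((1 : ℚ), (0 : ℚ))} := by
    intro ij hij
    rw [Finset.mem_addAntidiagonal] at hij
    obtain ⟨h1, h2, h3⟩ := hij
    have e1 := hP _ h1
    have e2 := hQ _ h2
    obtain ⟨z, hz⟩ := hPI _ h1
    obtain ⟨w, hw⟩ := hQI _ h2
    have hz0 : (0 : ℤ) ≤ z := by exact_mod_cast hz ▸ e1
    have hw0 : (0 : ℤ) ≤ w := by exact_mod_cast hw ▸ e2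
    have hzw : z + w = 1 := by
      have : (z : ℚ) + (w : ℚ) = 1 := by rw [hz, hw]; exact h3
      exact_mod_cast this
    have : z = 0 ∧ w = 1 ∨ z = 1 ∧ w = 0 := by omega
    rcases this with ⟨rfl, rfl⟩ | ⟨rfl, rfl⟩
    · simp only [Finset.mem_insert, Finset.mem_singleton, Prod.ext_iff]
      left
      constructor
      · rw [← hz]; norm_num
      · rw [← hw]; norm_num
    · simp only [Finset.mem_insert, Finset.mem_singleton, Prod.ext_iff]
      right
      constructor
      · rw [← hz]; norm_num
      · rw [← hw]; norm_num
  rw [Finset.sum_subset hsub]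
  · rw [Finset.sum_insert (by norm_num), Finset.sum_singleton]
  · intro x hx hnx
    rw [Finset.mem_addAntidiagonal] at hnx
    push_neg at hnx
    rcases Finset.mem_insert.mp hx with rfl | hx'
    · by_cases hp0 : P.coeff 0 = 0
      · simp [hp0]
      · by_cases hq1 : Q.coeff 1 = 0
        · simp [hq1]
        · exact absurd (by norm_num) (hnx hp0 hq1)
    · rw [Finset.mem_singleton] at hx'
      subst hx'
      by_cases hp1 : P.coeff 1 = 0
      · simp [hp1]
      · by_cases hq0 : Q.coeff 0 = 0
        · simp [hq0]
        · exact absurd (by norm_num) (hnx hp1 hq0)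

theorem hderiv_coeff (P : HahnSeries ℚ F) (q : ℚ) :
    (hderiv P).coeff q = ((q + 1 : ℚ) : F) * P.coeff (q + 1) := rfl

theorem suppGE_hderiv [CharZero F] {P : HahnSeries ℚ F} (h0 : SuppGE 0 P) (hI : SuppInt P) :
    SuppGE 0 (hderiv P) := by
  intro q hq
  rw [HahnSeries.mem_support, hderiv_coeff] at hq
  have h1 : P.coeff (q + 1) ≠ 0 := right_ne_zero_of_mul hq
  have h2 : ((q + 1 : ℚ) : F) ≠ 0 := left_ne_zero_of_mul hq
  have h3 : (q + 1) ∈ P.support := h1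
  obtain ⟨z, hz⟩ := hI _ h3
  have h4 : (0 : ℚ) ≤ q + 1 := h0 _ h3
  have h5 : (q + 1 : ℚ) ≠ 0 := fun hc => h2 (by rw [hc]; simp)
  have hz0 : (0 : ℤ) ≤ z := by exact_mod_cast hz ▸ h4
  have hz1 : z ≠ 0 := by rintro rfl; exact h5 (by simpa using hz.symm)
  have hz2 : (1 : ℤ) ≤ z := by omega
  have : (1 : ℚ) ≤ q + 1 := by rw [← hz]; exact_mod_cast hz2
  linarith

theorem hval_mul {P Q : HahnSeries ℚ F} (hP : P ≠ 0) (hQ : Q ≠ 0) :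
    hval (P * Q) = hval P + hval Q := by
  have h3 : P * Q ≠ 0 := mul_ne_zero hP hQ
  rw [hval_eq_orderTop, hval_eq_orderTop, hval_eq_orderTop,
      ← HahnSeries.order_eq_orderTop_of_ne_zero hP, ← HahnSeries.order_eq_orderTop_of_ne_zero hQ,
      ← HahnSeries.order_eq_orderTop_of_ne_zero h3, HahnSeries.order_mul hP hQ, WithTop.coe_add]

end BranchAux
namespace BranchAux

open HahnSeries Polynomial

variable {K F : Type} [Field K] [Field F] [Algebra K F]

/-- The Hahn series obtained by substituting `a + t` into a polynomial over `K`. -/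
def ser (a : F) (q : Polynomial K) : HahnSeries ℚ F :=
  q.eval₂ ((HahnSeries.C : F →+* HahnSeries ℚ F).comp (algebraMap K F))
    (HahnSeries.single 0 a + HahnSeries.single 1 1)

/-- The package of facts about `ser a q`. -/
def Pay (a : F) (q : Polynomial K) (P : HahnSeries ℚ F) : Prop :=
  SuppGE 0 P ∧ SuppInt P ∧ P.coeff 0 = Polynomial.aeval a q ∧
    P.coeff 1 = Polynomial.aeval a (Polynomial.derivative q)

theorem pay_add {a : F} {q₁ q₂ : Polynomial K} {P₁ P₂ : HahnSeries ℚ F}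
    (h₁ : Pay a q₁ P₁) (h₂ : Pay a q₂ P₂) : Pay a (q₁ + q₂) (P₁ + P₂) := by
  obtain ⟨hg₁, hi₁, hc₁, hd₁⟩ := h₁
  obtain ⟨hg₂, hi₂, hc₂, hd₂⟩ := h₂
  refine ⟨suppGE_add hg₁ hg₂, suppInt_add hi₁ hi₂, ?_, ?_⟩
  · simp [HahnSeries.coeff_add, hc₁, hc₂]
  · simp [HahnSeries.coeff_add, hd₁, hd₂]

theorem pay_mul {a : F} {q₁ q₂ : Polynomial K} {P₁ P₂ : HahnSeries ℚ F}
    (h₁ : Pay a q₁ P₁) (h₂ : Pay a q₂ P₂) : Pay a (q₁ * q₂) (P₁ * P₂) := by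
  obtain ⟨hg₁, hi₁, hc₁, hd₁⟩ := h₁
  obtain ⟨hg₂, hi₂, hc₂, hd₂⟩ := h₂
  refine ⟨by simpa using suppGE_mul hg₁ hg₂, suppInt_mul hi₁ hi₂, ?_, ?_⟩
  · rw [coeff_zero_mul hg₁ hg₂, hc₁, hc₂, map_mul]
  · rw [coeff_one_mul hg₁ hg₂ hi₁ hi₂, hc₁, hc₂, hd₁, hd₂, Polynomial.derivative_mul, map_add,
      map_mul, map_mul]
    ring

theorem pay_C {a : F} (c : K) :
    Pay a (Polynomial.C c) (HahnSeries.single 0 (algebraMap K F c)) := by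
  refine ⟨?_, ?_, ?_, ?_⟩
  · intro q hq
    have := HahnSeries.support_single_subset hq
    simp only [Set.mem_singleton_iff] at this
    simp [this]
  · intro q hq
    have := HahnSeries.support_single_subset hq
    simp only [Set.mem_singleton_iff] at this
    exact ⟨0, by simp [this]⟩
  · simp [HahnSeries.coeff_single_same]
  · rw [HahnSeries.coeff_single_of_ne (by norm_num)]
    simp

theorem pay_X {a : F} :
    Pay a (Polynomial.X : Polynomial K) (HahnSeries.single 0 a + HahnSeries.single 1 1) := by
  refine ⟨?_, ?_, ?_, ?_⟩
  · intro q hq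
    rcases HahnSeries.support_add_subset _ _ hq with h | h <;>
      [skip; skip] <;>
      · have := HahnSeries.support_single_subset h
        simp only [Set.mem_singleton_iff] at this
        simp [this]
  · intro q hq
    rcases HahnSeries.support_add_subset _ _ hq with h | h
    · have := HahnSeries.support_single_subset h
      simp only [Set.mem_singleton_iff] at this
      exact ⟨0, by simp [this]⟩
    · have := HahnSeries.support_single_subset h
      simp only [Set.mem_singleton_iff] at this
      exact ⟨1, by simp [this]⟩
  · rw [HahnSeries.coeff_add, HahnSeries.coeff_single_same,
      HahnSeries.coeff_single_of_ne (by norm_num)]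
    simp
  · rw [HahnSeries.coeff_add, HahnSeries.coeff_single_same,
      HahnSeries.coeff_single_of_ne (by norm_num)]
    simp

theorem pay_ser (a : F) (q : Polynomial K) : Pay a q (ser a q) := by
  induction q using Polynomial.induction_on with
  | C c => simpa [ser, Polynomial.eval₂_C] using pay_C (a := a) c
  | add p q hp hq => simpa [ser, Polynomial.eval₂_add] using pay_add hp hq
  | monomial n c ih =>
      have hstep : (Polynomial.C c * Polynomial.X ^ (n + 1) : Polynomial K) =
          (Polynomial.C c * Polynomial.X ^ n) * Polynomial.X := by ring
      rw [hstep]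
      have := pay_mul ih (pay_X (a := a) (K := K))
      simpa [ser, Polynomial.eval₂_mul] using this

theorem ser_suppGE0 (a : F) (q : Polynomial K) : SuppGE 0 (ser a q) := (pay_ser a q).1

theorem ser_suppInt (a : F) (q : Polynomial K) : SuppInt (ser a q) := (pay_ser a q).2.1

theorem ser_coeff_zero (a : F) (q : Polynomial K) :
    (ser a q).coeff 0 = Polynomial.aeval a q := (pay_ser a q).2.2.1

theorem ser_coeff_one (a : F) (q : Polynomial K) :
    (ser a q).coeff 1 = Polynomial.aeval a (Polynomial.derivative q) := (pay_ser a q).2.2.2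

theorem ser_hval_nonneg (a : F) (q : Polynomial K) : 0 ≤ hval (ser a q) :=
  hval_nonneg_iff.mpr (ser_suppGE0 a q)

theorem ser_suppGE_one {a : F} {q : Polynomial K} (h : Polynomial.aeval a q = 0) :
    SuppGE 1 (ser a q) := by
  intro x hx
  obtain ⟨z, hz⟩ := ser_suppInt a q x hx
  have h0 : (0 : ℚ) ≤ x := ser_suppGE0 a q x hx
  have hne : x ≠ 0 := by
    intro hc
    rw [HahnSeries.mem_support, hc, ser_coeff_zero, h] at hx
    exact hx rfl
  have hz0 : (0 : ℤ) ≤ z := by exact_mod_cast hz ▸ h0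
  have hz1 : z ≠ 0 := fun hc => hne (by rw [← hz, hc]; norm_num)
  have : (1 : ℤ) ≤ z := by omega
  rw [← hz]
  exact_mod_cast this

theorem ser_hval_ge_one {a : F} {q : Polynomial K} (h : Polynomial.aeval a q = 0) :
    1 ≤ hval (ser a q) := by
  have := le_hval_iff.mpr (ser_suppGE_one h)
  simpa using this

theorem ser_hval_eq_zero {a : F} {q : Polynomial K} (h : Polynomial.aeval a q ≠ 0) :
    hval (ser a q) = 0 := by
  refine le_antisymm ?_ (ser_hval_nonneg a q)
  have : (ser a q).coeff 0 ≠ 0 := by rw [ser_coeff_zero]; exact h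
  have h2 := HahnSeries.orderTop_le_of_coeff_ne_zero this
  rw [hval_eq_orderTop]
  simpa using h2

theorem ser_hval_eq_one {a : F} {q : Polynomial K} (h0 : Polynomial.aeval a q = 0)
    (h1 : Polynomial.aeval a (Polynomial.derivative q) ≠ 0) :
    hval (ser a q) = 1 := by
  refine le_antisymm ?_ (ser_hval_ge_one h0)
  have : (ser a q).coeff 1 ≠ 0 := by rw [ser_coeff_one]; exact h1
  have h2 := HahnSeries.orderTop_le_of_coeff_ne_zero this
  rw [hval_eq_orderTop]
  simpa using h2

/-- Any embedding of the family applied to the image of a polynomial gives `ser a q`. -/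
theorem emb_toA {m : Polynomial (RatFunc K)} {a : F} (σ : EmbFamily K F m a)
    (k : Fin m.natDegree) (q : Polynomial K) :
    σ.emb k (toA m q) = ser a q := by
  have hhom : ((σ.emb k).comp ((algebraMap (RatFunc K) (AdjoinRoot m)).comp
      (algebraMap (Polynomial K) (RatFunc K)))) =
      Polynomial.eval₂RingHom ((HahnSeries.C : F →+* HahnSeries ℚ F).comp (algebraMap K F))
        (HahnSeries.single 0 a + HahnSeries.single 1 1) := by
    apply Polynomial.ringHom_ext
    · intro c
      have := σ.emb_C k c
      simpa [toA, HahnSeries.C_apply] using this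
    · have := σ.emb_X k
      simpa [toA] using this
  have h2 := DFunLike.congr_fun hhom q
  simpa [toA, ser] using h2

end BranchAux
namespace BranchAux

open HahnSeries Polynomial

variable {K F : Type} [Field K] [Field F] [Algebra K F]

/-- The ring homomorphism on Hahn series induced by a field homomorphism on coefficients. -/
def hahnMap (ψ : F →+* F) : HahnSeries ℚ F →+* HahnSeries ℚ F where
  toFun P := P.map ψ
  map_one' := by
    ext g
    by_cases h : g = 0 <;> simp [HahnSeries.map_coeff, h, ← HahnSeries.single_zero_one,
      HahnSeries.coeff_single]
  map_mul' x y := HahnSeries.map_mul (ψ : F →ₙ+* F)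
  map_zero' := by ext g; simp [HahnSeries.map_coeff]
  map_add' x y := HahnSeries.map_add ψ.toAddMonoidHom

theorem hahnMap_coeff (ψ : F →+* F) (P : HahnSeries ℚ F) (q : ℚ) :
    (hahnMap ψ P).coeff q = ψ (P.coeff q) := rfl

theorem hahnMap_single (ψ : F →+* F) (x : ℚ) (r : F) :
    hahnMap ψ (HahnSeries.single x r) = HahnSeries.single x (ψ r) := by
  ext g
  rw [hahnMap_coeff, HahnSeries.coeff_single, HahnSeries.coeff_single]
  split_ifs <;> simp

theorem hahnMap_support (ψ : F →+* F) (P : HahnSeries ℚ F) :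
    (hahnMap ψ P).support ⊆ P.support := by
  intro q hq
  rw [HahnSeries.mem_support, hahnMap_coeff] at hq
  intro hc
  exact hq (by rw [hc, map_zero])

theorem hahnMap_injective (ψ : F →+* F) : Function.Injective (hahnMap ψ) := by
  intro P Q h
  ext g
  have := congrArg (fun R => HahnSeries.coeff R g) h
  simp only [hahnMap_coeff] at this
  exact ψ.injective this

theorem suppInt_hahnMap {ψ : F →+* F} {P : HahnSeries ℚ F} (h : SuppInt P) :
    SuppInt (hahnMap ψ P) := fun q hq => h q (hahnMap_support ψ P hq)

variable {m : Polynomial (RatFunc K)}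

/-- A ring homomorphism `A →+* HahnSeries ℚ F` pinned by the requirement of an
embedding family at `a`. -/
def Pinned (a : F) (χ : AdjoinRoot m →+* HahnSeries ℚ F) : Prop :=
  (∀ c : K, χ (toA m (Polynomial.C c)) = HahnSeries.single 0 (algebraMap K F c)) ∧
    χ (toA m Polynomial.X) = HahnSeries.single 0 a + HahnSeries.single 1 1

theorem pinned_emb {a : F} (σ : EmbFamily K F m a) (k : Fin m.natDegree) :
    Pinned a (σ.emb k) := ⟨σ.emb_C k, σ.emb_X k⟩

theorem ratfunc_hom_ext {β₁ β₂ : RatFunc K →+* HahnSeries ℚ F}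
    (h : ∀ q : Polynomial K, β₁ (algebraMap (Polynomial K) (RatFunc K) q) =
      β₂ (algebraMap (Polynomial K) (RatFunc K) q)) : β₁ = β₂ := by
  refine RingHom.ext fun r => ?_
  have hd0 : algebraMap (Polynomial K) (RatFunc K) r.denom ≠ 0 := fun hc =>
    RatFunc.denom_ne_zero r (RatFunc.algebraMap_injective K (by rw [hc, map_zero]))
  have hnum : r * algebraMap (Polynomial K) (RatFunc K) r.denom =
      algebraMap (Polynomial K) (RatFunc K) r.num := by
    have h0 := RatFunc.num_div_denom r
    rw [div_eq_iff hd0] at h0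
    rw [← h0]
  have e1 := congrArg β₁ hnum
  have e2 := congrArg β₂ hnum
  rw [map_mul, h r.denom, h r.num] at e1
  rw [map_mul] at e2
  have hne : β₂ (algebraMap (Polynomial K) (RatFunc K) r.denom) ≠ 0 := fun hc =>
    hd0 (β₂.injective (by rw [hc, map_zero]))
  exact mul_right_cancel₀ hne (e1.trans e2.symm)

theorem pinned_base_eq {a b : F} {χ₁ χ₂ : AdjoinRoot m →+* HahnSeries ℚ F}
    (h₁ : Pinned a χ₁) (h₂ : Pinned a χ₂) :
    χ₁.comp (algebraMap (RatFunc K) (AdjoinRoot m)) =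
      χ₂.comp (algebraMap (RatFunc K) (AdjoinRoot m)) := by
  apply ratfunc_hom_ext
  intro q
  have hhom : (χ₁.comp (algebraMap (RatFunc K) (AdjoinRoot m))).comp
      (algebraMap (Polynomial K) (RatFunc K)) =
      (χ₂.comp (algebraMap (RatFunc K) (AdjoinRoot m))).comp
      (algebraMap (Polynomial K) (RatFunc K)) := by
    apply Polynomial.ringHom_ext
    · intro c
      simpa [toA] using (h₁.1 c).trans (h₂.1 c).symm
    · simpa [toA] using h₁.2.trans h₂.2.symm
  exact DFunLike.congr_fun hhom q

theorem pinned_ext {a : F} {χ₁ χ₂ : AdjoinRoot m →+* HahnSeries ℚ F}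
    (h₁ : Pinned a χ₁) (h₂ : Pinned a χ₂)
    (hroot : χ₁ (AdjoinRoot.root m) = χ₂ (AdjoinRoot.root m)) : χ₁ = χ₂ := by
  have hbase := pinned_base_eq (b := a) h₁ h₂
  refine RingHom.ext fun z => ?_
  obtain ⟨q, rfl⟩ := AdjoinRoot.mk_surjective z
  rw [← AdjoinRoot.aeval_eq, Polynomial.aeval_def, Polynomial.hom_eval₂, Polynomial.hom_eval₂,
    hbase, hroot]

theorem pinned_root_isRoot {a : F} {χ : AdjoinRoot m →+* HahnSeries ℚ F} (h : Pinned a χ) :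
    (m.map (χ.comp (algebraMap (RatFunc K) (AdjoinRoot m)))).IsRoot (χ (AdjoinRoot.root m)) := by
  rw [Polynomial.IsRoot, Polynomial.eval_map, ← Polynomial.hom_eval₂, AdjoinRoot.algebraMap_eq,
    AdjoinRoot.eval₂_root, map_zero]

end BranchAux
namespace BranchAux

open HahnSeries Polynomial

variable {K F : Type} [Field K] [Field F] [Algebra K F]
variable {m : Polynomial (RatFunc K)} [Fact (Irreducible m)]

theorem pinned_hahnMap_comp {a b : F} {χ : AdjoinRoot m →+* HahnSeries ℚ F}
    (h : Pinned a χ) (ψ : F →+* F) (hψK : ∀ c : K, ψ (algebraMap K F c) = algebraMap K F c)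
    (hψa : ψ a = b) : Pinned b ((hahnMap ψ).comp χ) := by
  constructor
  · intro c
    rw [RingHom.comp_apply, h.1 c, hahnMap_single, hψK]
  · rw [RingHom.comp_apply, h.2, map_add, hahnMap_single, hahnMap_single, hψa, map_one]

/-- Transfer of embedding families between Galois-conjugate points: every embedding at `b`
is a coefficientwise twist of an embedding at `a`. -/
theorem emb_transfer {a b : F} (σa : EmbFamily K F m a) (σb : EmbFamily K F m b)
    (ψ : F →+* F) (hψK : ∀ c : K, ψ (algebraMap K F c) = algebraMap K F c) (hψa : ψ a = b)
    (k : Fin m.natDegree) :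
    ∃ k', σb.emb k = (hahnMap ψ).comp (σa.emb k') := by
  classical
  -- the two families of pinned homomorphisms at b
  set χ : Fin m.natDegree → (AdjoinRoot m →+* HahnSeries ℚ F) :=
    fun k' => (hahnMap ψ).comp (σa.emb k') with hχ
  have hPb : ∀ k, Pinned b (σb.emb k) := fun k => pinned_emb σb k
  have hPχ : ∀ k', Pinned b (χ k') := fun k' =>
    pinned_hahnMap_comp (pinned_emb σa k') ψ hψK hψa
  -- the common base homomorphism
  set β : RatFunc K →+* HahnSeries ℚ F :=
    (σb.emb k).comp (algebraMap (RatFunc K) (AdjoinRoot m)) with hβ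
  have hbase : ∀ (χ' : AdjoinRoot m →+* HahnSeries ℚ F), Pinned b χ' →
      χ'.comp (algebraMap (RatFunc K) (AdjoinRoot m)) = β :=
    fun χ' h' => pinned_base_eq (b := b) h' (hPb k)
  have hβinj : Function.Injective β := β.injective
  -- the polynomial whose roots all these values are
  set Q : Polynomial (HahnSeries ℚ F) := m.map β with hQdef
  have hm0 : m ≠ 0 := (Fact.out : Irreducible m).ne_zero
  have hQ0 : Q ≠ 0 := (Polynomial.map_ne_zero_iff hβinj).mpr hm0
  have hQdeg : Q.natDegree = m.natDegree := Polynomial.natDegree_map_eq_of_injective hβinj m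
  -- roots of Q as a Finset
  set t : Finset (HahnSeries ℚ F) := Q.roots.toFinset with ht
  have htcard : t.card ≤ m.natDegree := by
    calc t.card ≤ Multiset.card Q.roots := Q.roots.toFinset_card_le
    _ ≤ Q.natDegree := Polynomial.card_roots' Q
    _ = m.natDegree := hQdeg
  have hmem : ∀ (χ' : AdjoinRoot m →+* HahnSeries ℚ F), Pinned b χ' →
      χ' (AdjoinRoot.root m) ∈ t := by
    intro χ' h'
    rw [ht, Multiset.mem_toFinset, Polynomial.mem_roots hQ0, hQdef, ← hbase χ' h']
    exact pinned_root_isRoot h'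
  -- the two value sets
  set s₁ : Finset (HahnSeries ℚ F) :=
    Finset.univ.image (fun j => σb.emb j (AdjoinRoot.root m)) with hs₁
  set s₂ : Finset (HahnSeries ℚ F) :=
    Finset.univ.image (fun j => χ j (AdjoinRoot.root m)) with hs₂
  have hinj₁ : Function.Injective (fun j => σb.emb j (AdjoinRoot.root m)) := by
    intro j j' hjj
    exact σb.emb_injective (pinned_ext (hPb j) (hPb j') hjj)
  have hinj₂ : Function.Injective (fun j => χ j (AdjoinRoot.root m)) := by
    intro j j' hjj
    have h2 : χ j = χ j' := pinned_ext (hPχ j) (hPχ j') hjj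
    have h3 : σa.emb j = σa.emb j' := by
      refine RingHom.ext fun z => ?_
      have := DFunLike.congr_fun h2 z
      exact hahnMap_injective ψ this
    exact σa.emb_injective h3
  have hcard₁ : s₁.card = m.natDegree := by
    rw [hs₁, Finset.card_image_of_injective _ hinj₁, Finset.card_univ, Fintype.card_fin]
  have hcard₂ : s₂.card = m.natDegree := by
    rw [hs₂, Finset.card_image_of_injective _ hinj₂, Finset.card_univ, Fintype.card_fin]
  have hsub₁ : s₁ ⊆ t := by
    intro x hx
    rw [hs₁, Finset.mem_image] at hx
    obtain ⟨j, _, rfl⟩ := hx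
    exact hmem _ (hPb j)
  have hsub₂ : s₂ ⊆ t := by
    intro x hx
    rw [hs₂, Finset.mem_image] at hx
    obtain ⟨j, _, rfl⟩ := hx
    exact hmem _ (hPχ j)
  have heq₁ : s₁ = t := Finset.eq_of_subset_of_card_le hsub₁ (by omega)
  have heq₂ : s₂ = t := Finset.eq_of_subset_of_card_le hsub₂ (by omega)
  have hval : σb.emb k (AdjoinRoot.root m) ∈ s₂ := by
    rw [heq₂, ← heq₁, hs₁]
    exact Finset.mem_image_of_mem _ (Finset.mem_univ k)
  rw [hs₂, Finset.mem_image] at hval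
  obtain ⟨k', _, hk'⟩ := hval
  exact ⟨k', pinned_ext (hPb k) (hPχ k') hk'.symm⟩

end BranchAux
namespace BranchAux

open Polynomial

theorem exists_psi {K : Type} [Field K] (a b : AlgebraicClosure K)
    (hb : Polynomial.aeval b (minpoly K a) = 0) :
    ∃ ψ : AlgebraicClosure K →+* AlgebraicClosure K,
      (∀ c : K, ψ (algebraMap K (AlgebraicClosure K) c) = algebraMap K (AlgebraicClosure K) c) ∧
        ψ a = b := by
  obtain ⟨σ, hσ⟩ := minpoly.exists_algEquiv_of_root
    (Algebra.IsAlgebraic.isAlgebraic (R := K) a) hb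
  refine ⟨σ.symm.toAlgHom.toRingHom, fun c => σ.symm.commutes c, ?_⟩
  have h1 : σ.symm a = σ.symm (σ b) := by rw [hσ]
  simpa [AlgEquiv.symm_apply_apply] using h1

end BranchAux


set_option maxHeartbeats 1000000 in
set_option synthInstance.maxHeartbeats 400000 in
/-- Let `W = (ω₁,…,ωₙ)` be an integral basis of `A`, and let `e ∈ K[x]` and
`M ∈ K[x]^{n×n}` satisfy `eW′ = MW` with `gcd(e, m₁₁,…,mₙₙ) = 1`. If `a ∈ K̄` is a root
of `e`, then there exists an element `ω` of `W` such that `a` is a branch point of `ω`. -/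
theorem exists_branch_point_of_root_of_e {K : Type} [Field K] [CharZero K]
    (m : Polynomial (RatFunc K)) [Fact (Irreducible m)]
    (D : AdjoinRoot m → AdjoinRoot m) (hD : IsDerivationOnA m D)
    (σ : ∀ a : AlgebraicClosure K, EmbFamily K (AlgebraicClosure K) m a)
    (hσ : ∀ a, IsDiffFamily D (σ a))
    (W : Fin m.natDegree → AdjoinRoot m) (hW : IsIntegralBasis σ W)
    (e : Polynomial K) (M : Matrix (Fin m.natDegree) (Fin m.natDegree) (Polynomial K))
    (hrel : DerivRel D W e M) (hgcd : GcdOne e M)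
    (a : AlgebraicClosure K) (ha : Polynomial.aeval a e = 0) :
    ∃ i, IsBranchPointOf (σ a) (W i) := by
  classical
  by_contra hbr
  push_neg at hbr
  haveI : CharZero (AlgebraicClosure K) :=
    charZero_of_injective_algebraMap (algebraMap K (AlgebraicClosure K)).injective
  -- unramifiedness at a
  have hunram_a : ∀ i k, BranchAux.SuppInt ((σ a).emb k (W i)) := by
    intro i k
    have h1 := hbr i
    unfold IsBranchPointOf at h1
    push_neg at h1
    exact BranchAux.not_ramified_iff.mp (h1 k)
  have hInt : IsIntegral K a := (Algebra.IsAlgebraic.isAlgebraic (R := K) a).isIntegral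
  set p : Polynomial K := minpoly K a with hpdef
  have hpe : p ∣ e := minpoly.dvd K a ha
  have hp0 : p ≠ 0 := minpoly.ne_zero hInt
  have htoAp : toA m p ≠ 0 := by
    intro hc
    apply hp0
    have h1 : algebraMap (Polynomial K) (RatFunc K) p = 0 :=
      (algebraMap (RatFunc K) (AdjoinRoot m)).injective (by rw [map_zero]; exact hc)
    exact RatFunc.algebraMap_injective K (by rw [map_zero]; exact h1)
  -- unramifiedness at every root of p
  have hunram : ∀ (c : AlgebraicClosure K), Polynomial.aeval c p = 0 →
      ∀ i k, BranchAux.SuppInt ((σ c).emb k (W i)) := by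
    intro c hc i k
    obtain ⟨ψ, hψK, hψa⟩ := BranchAux.exists_psi a c hc
    obtain ⟨k', hk'⟩ := BranchAux.emb_transfer (σ a) (σ c) ψ hψK hψa k
    rw [hk']
    exact BranchAux.suppInt_hahnMap (hunram_a i k')
  have hWnn : ∀ (c : AlgebraicClosure K) (j : Fin m.natDegree) (k : Fin m.natDegree),
      BranchAux.SuppGE 0 ((σ c).emb k (W j)) := fun c j k =>
    BranchAux.hval_nonneg_iff.mp (hW.2.1 j c k)
  have hder : ∀ c : AlgebraicClosure K, Polynomial.aeval c p = 0 →
      Polynomial.aeval c (Polynomial.derivative p) ≠ 0 := by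
    intro c hc hdc
    have hsep : p.Separable := (minpoly.irreducible hInt).separable
    obtain ⟨u, v, huv⟩ := hsep
    have h2 := congrArg (Polynomial.aeval c) huv
    rw [map_add, map_mul, map_mul, hc, hdc] at h2
    simp at h2
  have key : ∀ i j, p ∣ M i j := by
    intro i
    set h_i : AdjoinRoot m := toA m e * D (W i) with hhi
    have hsum : h_i = ∑ j, toA m (M i j) * W j := hrel i
    set f_i : AdjoinRoot m := (toA m p)⁻¹ * h_i with hfi
    have hpf : toA m p * f_i = h_i := by
      rw [hfi, ← mul_assoc, mul_inv_cancel₀ htoAp, one_mul]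
    have hmulf : ∀ (c : AlgebraicClosure K) (k : Fin m.natDegree),
        (σ c).emb k f_i * (σ c).emb k (toA m p) = (σ c).emb k h_i := by
      intro c k
      rw [← map_mul]
      congr 1
      rw [mul_comm]
      exact hpf
    have hint : IntegralElem σ f_i := by
      intro c k
      by_cases hz : (σ c).emb k f_i = 0
      · rw [hz]
        unfold hval
        simp
      have hp_ne : (σ c).emb k (toA m p) ≠ 0 := fun hcc =>
        htoAp (((σ c).emb k).injective (by rw [hcc, map_zero]))
      have hmul := BranchAux.hval_mul hz hp_ne
      rw [hmulf c k] at hmul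
      by_cases hc : Polynomial.aeval c p = 0
      · -- at a root of p
        have hhval_p : hval ((σ c).emb k (toA m p)) = 1 := by
          rw [BranchAux.emb_toA]
          exact BranchAux.ser_hval_eq_one hc (hder c hc)
        have hh1 : (1 : WithTop ℚ) ≤ hval ((σ c).emb k h_i) := by
          have hDh : (σ c).emb k h_i =
              (σ c).emb k (toA m e) * hderiv ((σ c).emb k (W i)) := by
            rw [hhi, map_mul, hσ c k (W i)]
          rw [hDh]
          have h1 : BranchAux.SuppGE 1 ((σ c).emb k (toA m e)) := by
            rw [BranchAux.emb_toA]
            apply BranchAux.ser_suppGE_one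
            obtain ⟨u, rfl⟩ := hpe
            rw [map_mul, hc, zero_mul]
          have h2 : BranchAux.SuppGE 0 (hderiv ((σ c).emb k (W i))) :=
            BranchAux.suppGE_hderiv (hWnn c i k) (hunram c hc i k)
          have h3 := BranchAux.suppGE_mul h1 h2
          rw [add_zero] at h3
          have h4 := BranchAux.le_hval_iff.mpr h3
          simpa using h4
        rw [hmul, hhval_p] at hh1
        obtain ⟨x, hx⟩ : ∃ x : ℚ, hval ((σ c).emb k f_i) = (x : WithTop ℚ) := by
          unfold hval
          rw [dif_neg hz]
          exact ⟨_, rfl⟩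
        rw [hx] at hh1
        have h5 : (1 : ℚ) ≤ x + 1 := by exact_mod_cast hh1
        have h6 : (0 : ℚ) ≤ x := by linarith
        rw [hx]
        exact_mod_cast h6
      · -- not a root of p
        have hhval_p : hval ((σ c).emb k (toA m p)) = 0 := by
          rw [BranchAux.emb_toA]
          exact BranchAux.ser_hval_eq_zero hc
        have hh0 : (0 : WithTop ℚ) ≤ hval ((σ c).emb k h_i) := by
          rw [hsum, map_sum]
          apply BranchAux.hval_nonneg_iff.mpr
          apply BranchAux.suppGE_sum
          intro j _
          rw [map_mul, BranchAux.emb_toA]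
          have h3 := BranchAux.suppGE_mul (BranchAux.ser_suppGE0 c (M i j)) (hWnn c j k)
          simpa using h3
        rw [hmul, hhval_p, add_zero] at hh0
        exact hh0
    obtain ⟨d, hd⟩ := hW.2.2 f_i hint
    have hhp : h_i = ∑ j, toA m (p * d j) * W j := by
      rw [← hpf, hd, Finset.mul_sum]
      apply Finset.sum_congr rfl
      intro j _
      rw [← mul_assoc]
      congr 1
      simp [toA, map_mul]
    have hzero : ∑ j, (algebraMap (Polynomial K) (RatFunc K) (M i j) -
        algebraMap (Polynomial K) (RatFunc K) (p * d j)) • W j = 0 := by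
      have h1 : ∑ j, toA m (M i j) * W j - ∑ j, toA m (p * d j) * W j = 0 := by
        rw [← hsum, ← hhp, sub_self]
      rw [← h1, ← Finset.sum_sub_distrib]
      apply Finset.sum_congr rfl
      intro j _
      rw [sub_smul, Algebra.smul_def, Algebra.smul_def]
      rfl
    have hLI := Fintype.linearIndependent_iff.mp hW.1.1 _ hzero
    intro j
    have h2 := hLI j
    rw [sub_eq_zero] at h2
    exact ⟨d j, RatFunc.algebraMap_injective K h2⟩
  exact (minpoly.irreducible hInt).not_isUnit (hgcd p hpe key)
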